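/- Let (y_n)_{n≥0} be a bounded sequence in a Banach space E and define g : [0,1] → E by g(t) = y_n for t ∈ [1 − 2^{−n}, 1 − 2^{−n−1}), n ∈ ℕ, and g(1) = 0. Then g is Riemann integrable on [0,1]. Conversely, if g (defined this way from a sequence (y_n)) is Riemann integrable, then (y_n) is bounded. -/

import Mathlib

open MeasureTheory Set Filter


noncomputable def stepIdx (s : ℝ) : ℕ := sInf {n | s < 1 - (1/2:ℝ)^(n+1)}

lemma stepIdx_nonempty {s : ℝ} (hs : s < 1) : {n | s < 1 - (1/2:ℝ)^(n+1)}.Nonempty := by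
  obtain ⟨n, hn⟩ := exists_pow_lt_of_lt_one (x := 1 - s) (y := (1/2:ℝ)) (by linarith) (by norm_num)
  refine ⟨n, ?_⟩
  have h2 : (0:ℝ) < (1/2:ℝ)^n := by positivity
  have : ((1:ℝ)/2)^(n+1) ≤ (1/2:ℝ)^n := by
    rw [pow_succ]; nlinarith
  simp only [Set.mem_setOf_eq]; linarith

lemma stepIdx_spec {s : ℝ} (hs : s < 1) : s < 1 - (1/2:ℝ)^(stepIdx s + 1) :=
  Nat.sInf_mem (stepIdx_nonempty hs)

lemma stepIdx_lb {s : ℝ} (hs0 : 0 ≤ s) : 1 - (1/2:ℝ)^(stepIdx s) ≤ s := by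
  rcases h : stepIdx s with _ | j
  · simpa using hs0
  · have : j ∉ {n | s < 1 - (1/2:ℝ)^(n+1)} := Nat.notMem_of_lt_sInf (by unfold stepIdx at h; omega)
    simp only [Set.mem_setOf_eq, not_lt] at this
    simpa [h] using this

lemma stepIdx_mono {a b : ℝ} (hab : a ≤ b) (hb : b < 1) : stepIdx a ≤ stepIdx b :=
  Nat.sInf_le (by have := stepIdx_spec hb; simp only [Set.mem_setOf_eq]; linarith)

lemma partition_mono {m : ℕ} {t : ℕ → ℝ} (h : ∀ i < m, t i < t (i + 1)) :
    ∀ i j, i ≤ j → j ≤ m → t i ≤ t j := by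
  intro i j hij hjm
  induction j with
  | zero =>
    have : i = 0 := Nat.le_zero.mp hij
    subst this; exact le_refl _
  | succ j ih =>
    rcases Nat.eq_or_lt_of_le hij with rfl | h'
    · exact le_refl _
    · exact le_trans (ih (by omega) (by omega)) (le_of_lt (h j (by omega)))

lemma step_g_eq {E : Type*} [NormedAddCommGroup E] [NormedSpace ℝ E]
    {y : ℕ → E} {g : ℝ → E}
    (hstep : ∀ n : ℕ, ∀ t ∈ Set.Ico (1 - (1 / 2 : ℝ) ^ n)
      (1 - (1 / 2 : ℝ) ^ (n + 1)), g t = y n)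
    {s : ℝ} (h0 : 0 ≤ s) (h1 : s < 1) : g s = y (stepIdx s) :=
  hstep _ s ⟨by simpa using stepIdx_lb h0, by simpa using stepIdx_spec h1⟩

lemma step_integrableOn {E : Type*} [NormedAddCommGroup E] [NormedSpace ℝ E]
    {y : ℕ → E} {g : ℝ → E} {M : ℝ}
    (hstep : ∀ n : ℕ, ∀ t ∈ Set.Ico (1 - (1 / 2 : ℝ) ^ n)
      (1 - (1 / 2 : ℝ) ^ (n + 1)), g t = y n)
    (h1 : g 1 = 0) (hM : ∀ n, ‖y n‖ ≤ M) :
    IntegrableOn g (Set.Icc (0:ℝ) 1) MeasureTheory.volume := by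
  set h : ℝ → E := fun s => if 0 ≤ s ∧ s < 1 then y (stepIdx s) else 0 with hh
  have hmeas : StronglyMeasurable h := by
    set f : ℕ → ℝ → E := fun N s => ∑ n ∈ Finset.range N,
      Set.indicator (Set.Ico (1 - (1/2:ℝ)^n) (1 - (1/2:ℝ)^(n+1))) (fun _ => y n) s with hf
    have hfm : ∀ N, StronglyMeasurable (f N) := by
      intro N
      exact Finset.stronglyMeasurable_fun_sum _ fun n _ =>
        (stronglyMeasurable_const : StronglyMeasurable (fun _ : ℝ => y n)).indicator (measurableSet_Ico : MeasurableSet (Set.Ico (1 - (1/2:ℝ)^n) (1 - (1/2:ℝ)^(n+1))))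
    refine stronglyMeasurable_of_tendsto atTop hfm ?_
    rw [tendsto_pi_nhds]
    intro s
    by_cases hs : 0 ≤ s ∧ s < 1
    · refine tendsto_const_nhds.congr' ?_
      filter_upwards [eventually_ge_atTop (stepIdx s + 1)] with N hN
      have hsmem : s ∈ Set.Ico (1 - (1/2:ℝ)^(stepIdx s)) (1 - (1/2:ℝ)^(stepIdx s + 1)) :=
        ⟨stepIdx_lb hs.1, stepIdx_spec hs.2⟩
      have : f N s = y (stepIdx s) := by
        simp only [hf]
        rw [Finset.sum_eq_single (stepIdx s)]
        · exact Set.indicator_of_mem hsmem _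
        · intro n _ hn
          apply Set.indicator_of_notMem
          intro hmem
          rcases lt_or_gt_of_ne hn with hlt | hgt
          · have h1' : ((1:ℝ)/2)^(stepIdx s) ≤ (1/2)^(n+1) :=
              pow_le_pow_of_le_one (by norm_num) (by norm_num) (by omega)
            have := hmem.2; have := hsmem.1; linarith
          · have h1' : ((1:ℝ)/2)^n ≤ (1/2)^(stepIdx s + 1) :=
              pow_le_pow_of_le_one (by norm_num) (by norm_num) (by omega)
            have := hmem.1; have := hsmem.2; linarith
        · intro hmem; exact absurd (Finset.mem_range.mpr (by omega)) hmem
      simp [hh, hs, this]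
    · have : ∀ N, f N s = 0 := by
        intro N
        simp only [hf]
        apply Finset.sum_eq_zero
        intro n _
        apply Set.indicator_of_notMem
        intro hmem
        have h0 : (0:ℝ) ≤ 1 - (1/2:ℝ)^n := by
          have : ((1:ℝ)/2)^n ≤ 1 := pow_le_one₀ (by norm_num) (by norm_num)
          linarith
        have h1' : 1 - (1/2:ℝ)^(n+1) ≤ 1 := by
          have : (0:ℝ) < (1/2:ℝ)^(n+1) := by positivity
          linarith
        exact hs ⟨le_trans h0 hmem.1, lt_of_lt_of_le hmem.2 h1'⟩
      simp only [this, hh]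
      simp [hs]
  have hgh : Set.EqOn h g (Set.Icc (0:ℝ) 1) := by
    intro s hs
    rcases eq_or_lt_of_le hs.2 with rfl | hlt
    · simp [hh, h1]
    · rw [hh]; simp only [hs.1, hlt, and_self, if_true]
      exact (step_g_eq hstep hs.1 hlt).symm
  refine MeasureTheory.IntegrableOn.congr_fun ?_ hgh measurableSet_Icc
  apply MeasureTheory.Measure.integrableOn_of_bounded (M := max M 0)
    (by simp [Real.volume_Icc]) hmeas.aestronglyMeasurable
  filter_upwards with s
  rw [hh]
  by_cases hs : 0 ≤ s ∧ s < 1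
  · simp only [hs, if_true]; exact le_trans (hM _) (le_max_left _ _)
  · simp [hs]

def RiemannIntegrableOn {E : Type*} [NormedAddCommGroup E] [NormedSpace ℝ E]
    (g : ℝ → E) (a b : ℝ) : Prop :=
  ∃ I : E, ∀ ε > (0 : ℝ), ∃ δ > (0 : ℝ), ∀ m : ℕ, ∀ t ξ : ℕ → ℝ,
    t 0 = a → t m = b → (∀ i < m, t i < t (i + 1)) →
    (∀ i < m, ξ i ∈ Set.Icc (t i) (t (i + 1))) →
    (∀ i < m, t (i + 1) - t i < δ) →
    ‖(∑ i ∈ Finset.range m, (t (i + 1) - t i) • g (ξ i)) - I‖ < ε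

private theorem step_forward {E : Type*}
    [NormedAddCommGroup E] [NormedSpace ℝ E] [CompleteSpace E]
    (y : ℕ → E) (g : ℝ → E)
    (hstep : ∀ n : ℕ, ∀ t ∈ Set.Ico (1 - (1 / 2 : ℝ) ^ n)
      (1 - (1 / 2 : ℝ) ^ (n + 1)), g t = y n)
    (h1 : g 1 = 0) (h : RiemannIntegrableOn g 0 1) : ∃ M : ℝ, ∀ n, ‖y n‖ ≤ M := by
  obtain ⟨I, hI⟩ := h
  obtain ⟨δ, hδ, hI1⟩ := hI 1 one_pos
  obtain ⟨m', hm'⟩ := exists_nat_one_div_lt hδ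
  set m : ℕ := m' + 1 with hm
  have hmpos : (0:ℝ) < m := by positivity
  have hmδ : (1:ℝ)/m < δ := by exact_mod_cast hm'
  set t : ℕ → ℝ := fun i => (i:ℝ)/m with htdef
  have ht0 : t 0 = 0 := by simp [htdef]
  have htm : t m = 1 := by simp only [htdef]; exact div_self (ne_of_gt hmpos)
  have htinc : ∀ i < m, t i < t (i+1) := by
    intro i _
    simp only [htdef]
    rw [div_lt_div_iff₀ hmpos hmpos]
    push_cast
    nlinarith [hmpos]
  have hmesh : ∀ i < m, t (i+1) - t i < δ := by
    intro i _
    have : t (i+1) - t i = 1/m := by simp only [htdef]; push_cast; ring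
    rw [this]; exact hmδ
  obtain ⟨N, hN⟩ := exists_pow_lt_of_lt_one (x := (1:ℝ)/m) (y := (1/2:ℝ)) (by positivity) (by norm_num)
  -- key bound for n ≥ N
  have key : ∀ n, N ≤ n → ‖y n‖ ≤ 2 * m := by
    intro n hn
    have hpow : ((1:ℝ)/2)^n ≤ (1/2)^N := pow_le_pow_of_le_one (by norm_num) (by norm_num) hn
    have hpowm : ((1:ℝ)/2)^n < 1/m := lt_of_le_of_lt hpow hN
    set ξ : ℕ → ℝ := fun i => if i = m - 1 then 1 - (1/2:ℝ)^n else (i:ℝ)/m with hξdef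
    set ξ' : ℕ → ℝ := fun i => if i = m - 1 then 1 else (i:ℝ)/m with hξ'def
    have htm1 : t (m-1) = 1 - 1/m := by
      simp only [htdef]
      have h4 : ((m-1 : ℕ):ℝ) = (m:ℝ) - 1 := by
        rw [Nat.cast_sub (by omega)]; norm_num
      rw [h4]; field_simp
    have hmem1 : 1 - (1/2:ℝ)^n ∈ Set.Icc (t (m-1)) (t m) := by
      rw [htm1, htm]
      constructor
      · linarith
      · have : (0:ℝ) < (1/2:ℝ)^n := by positivity
        linarith
    have hmemξ : ∀ i < m, ξ i ∈ Set.Icc (t i) (t (i+1)) := by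
      intro i hi
      by_cases hie : i = m - 1
      · have h2 : m - 1 + 1 = m := by omega
        simp only [hξdef, if_pos hie]
        rw [hie, h2]; exact hmem1
      · simp only [hξdef, if_neg hie]
        exact ⟨le_refl _, le_of_lt (htinc i hi)⟩
    have hmemξ' : ∀ i < m, ξ' i ∈ Set.Icc (t i) (t (i+1)) := by
      intro i hi
      by_cases hie : i = m - 1
      · have h2 : m - 1 + 1 = m := by omega
        simp only [hξ'def, if_pos hie]
        rw [hie, h2, htm1, htm]
        constructor
        · have : (0:ℝ) < 1/m := by positivity
          linarith
        · exact le_refl _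
      · simp only [hξ'def, if_neg hie]
        exact ⟨le_refl _, le_of_lt (htinc i hi)⟩
    have hb1 := hI1 m t ξ ht0 htm htinc hmemξ hmesh
    have hb2 := hI1 m t ξ' ht0 htm htinc hmemξ' hmesh
    have hdiff : (∑ i ∈ Finset.range m, (t (i + 1) - t i) • g (ξ i))
        - (∑ i ∈ Finset.range m, (t (i + 1) - t i) • g (ξ' i)) = (1/(m:ℝ)) • y n := by
      rw [← Finset.sum_sub_distrib]
      have : ∀ i ∈ Finset.range m, (t (i + 1) - t i) • g (ξ i) - (t (i + 1) - t i) • g (ξ' i)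
          = if i = m - 1 then (1/(m:ℝ)) • y n else 0 := by
        intro i hi
        by_cases hie : i = m - 1
        · rw [hie, if_pos rfl]
          have h2 : m - 1 + 1 = m := by omega
          have hΔ : t (m - 1 + 1) - t (m-1) = 1/m := by
            rw [h2, htm, htm1]; ring
          have hξv : ξ (m-1) = 1 - (1/2:ℝ)^n := by simp [hξdef]
          have hgξ : g (ξ (m-1)) = y n := by
            rw [hξv]
            apply hstep
            constructor
            · exact le_refl _
            · have h3 : ((1:ℝ)/2)^(n+1) < (1/2)^n := by
                rw [pow_succ]
                have : (0:ℝ) < (1/2:ℝ)^n := by positivity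
                linarith
              linarith
          have hξ'v : ξ' (m-1) = 1 := by simp [hξ'def]
          have hgξ' : g (ξ' (m-1)) = 0 := by rw [hξ'v]; exact h1
          rw [hgξ, hgξ', hΔ, smul_zero, sub_zero]
        · rw [if_neg hie]
          have : ξ i = ξ' i := by simp only [hξdef, hξ'def, if_neg hie]
          rw [this, sub_self]
      rw [Finset.sum_congr rfl this, Finset.sum_ite_eq' (Finset.range m) (m-1)]
      simp [Finset.mem_range.mpr (show m - 1 < m by omega)]
    have hnorm : ‖(1/(m:ℝ)) • y n‖ < 2 := by
      rw [← hdiff]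
      have h3 : (∑ i ∈ Finset.range m, (t (i + 1) - t i) • g (ξ i))
          - (∑ i ∈ Finset.range m, (t (i + 1) - t i) • g (ξ' i))
          = ((∑ i ∈ Finset.range m, (t (i + 1) - t i) • g (ξ i)) - I)
          - ((∑ i ∈ Finset.range m, (t (i + 1) - t i) • g (ξ' i)) - I) := by abel
      rw [h3]
      exact lt_of_le_of_lt (norm_sub_le _ _) (by linarith)
    rw [norm_smul, Real.norm_eq_abs, abs_of_pos (by positivity : (0:ℝ) < 1/(m:ℝ))] at hnorm
    calc ‖y n‖ = (m:ℝ) * ((1/(m:ℝ)) * ‖y n‖) := by field_simp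
      _ ≤ (m:ℝ) * 2 := mul_le_mul_of_nonneg_left (le_of_lt hnorm) (le_of_lt hmpos)
      _ = 2 * m := by ring
  set B : NNReal := (Finset.range N).sup (fun k => ‖y k‖₊) with hB
  refine ⟨max (2*(m:ℝ)) (B:ℝ), fun n => ?_⟩
  by_cases hn : n < N
  · refine le_trans ?_ (le_max_right _ _)
    exact_mod_cast NNReal.coe_le_coe.mpr (Finset.le_sup (f := fun k => ‖y k‖₊) (Finset.mem_range.mpr hn))
  · exact le_trans (key n (by omega)) (le_max_left _ _)

private theorem step_backward {E : Type*}
    [NormedAddCommGroup E] [NormedSpace ℝ E] [CompleteSpace E]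
    (y : ℕ → E) (g : ℝ → E)
    (hstep : ∀ n : ℕ, ∀ t ∈ Set.Ico (1 - (1 / 2 : ℝ) ^ n)
      (1 - (1 / 2 : ℝ) ^ (n + 1)), g t = y n)
    (h1 : g 1 = 0) (hbd : ∃ M : ℝ, ∀ n, ‖y n‖ ≤ M) : RiemannIntegrableOn g 0 1 := by
  obtain ⟨M, hM⟩ := hbd
  set M' : ℝ := max M 1 with hM'def
  have hM' : ∀ n, ‖y n‖ ≤ M' := fun n => le_trans (hM n) (le_max_left _ _)
  have hM'pos : (0:ℝ) < M' := lt_of_lt_of_le one_pos (le_max_right _ _)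
  have hgbound : ∀ s ∈ Set.Icc (0:ℝ) 1, ‖g s‖ ≤ M' := by
    intro s hs
    rcases eq_or_lt_of_le hs.2 with rfl | hlt
    · rw [h1, norm_zero]; linarith
    · rw [step_g_eq hstep hs.1 hlt]; exact hM' _
  have hint : IntegrableOn g (Set.Icc (0:ℝ) 1) volume := step_integrableOn hstep h1 hM'
  refine ⟨∫ x in (0:ℝ)..1, g x, ?_⟩
  intro ε hε
  obtain ⟨N, hN⟩ := exists_pow_lt_of_lt_one (x := ε/(8*M')) (y := (1/2:ℝ))
    (by positivity) (by norm_num)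
  set δ : ℝ := ε/(8*M'*(2*(N:ℝ)+1)) with hδdef
  have hδpos : 0 < δ := by positivity
  refine ⟨δ, hδpos, ?_⟩
  intro m t ξ ht0 htm hinc hmem hmesh
  have tmono := partition_mono hinc
  have htin : ∀ i ≤ m, t i ∈ Set.Icc (0:ℝ) 1 := by
    intro i hi
    constructor
    · rw [← ht0]; exact tmono 0 i (by omega) hi
    · rw [← htm]; exact tmono i m hi (le_refl _)
  -- the bad set
  set D : Set ℝ := (⋃ k ∈ Finset.Icc 1 N,
      Set.Ioo (1-(1/2:ℝ)^k - δ) (1-(1/2:ℝ)^k + δ)) ∪ Set.Ioc (1-(1/2:ℝ)^N - δ) 1 with hDdef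
  have hDmeas : MeasurableSet D := by
    apply MeasurableSet.union
    · exact MeasurableSet.biUnion (Finset.countable_toSet _) (fun k _ => measurableSet_Ioo)
    · exact measurableSet_Ioc
  set C : ℝ := 2*M' with hCdef
  set ind : ℝ → ℝ := D.indicator (fun _ => C) with hinddef
  have hindnn : ∀ s, 0 ≤ ind s := by
    intro s
    rw [hinddef]
    apply Set.indicator_nonneg
    intro _ _; positivity
  have hindbd : ∀ s, ‖ind s‖ ≤ C := by
    intro s
    rw [hinddef, Real.norm_eq_abs]
    by_cases hs : s ∈ D
    · rw [Set.indicator_of_mem hs]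
      rw [abs_of_pos (by positivity)]
    · rw [Set.indicator_of_notMem hs]
      simp; positivity
  have hindsm : StronglyMeasurable ind := stronglyMeasurable_const.indicator hDmeas
  -- interval integrability of g and ind on pieces
  have hpieces : ∀ i < m, Set.Icc (t i) (t (i+1)) ⊆ Set.Icc (0:ℝ) 1 := by
    intro i hi
    apply Set.Icc_subset_Icc (htin i (by omega)).1 (htin (i+1) (by omega)).2
  have hpint : ∀ i < m, IntervalIntegrable g volume (t i) (t (i+1)) := by
    intro i hi
    rw [intervalIntegrable_iff_integrableOn_Icc_of_le (le_of_lt (hinc i hi))]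
    exact hint.mono_set (hpieces i hi)
  have hindint : ∀ i < m, IntervalIntegrable ind volume (t i) (t (i+1)) := by
    intro i hi
    rw [intervalIntegrable_iff_integrableOn_Icc_of_le (le_of_lt (hinc i hi))]
    apply MeasureTheory.Measure.integrableOn_of_bounded (M := C)
      (by simp [Real.volume_Icc]) hindsm.aestronglyMeasurable
    filter_upwards with s using hindbd s
  -- pointwise bound
  have hpt : ∀ i < m, ∀ s ∈ Set.Icc (t i) (t (i+1)), ‖g (ξ i) - g s‖ ≤ ind s := by
    intro i hi s hs
    by_cases hgs : g (ξ i) = g s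
    · rw [hgs, sub_self, norm_zero]; exact hindnn s
    · have hsD : s ∈ D := by
        have key : ∀ a b : ℝ, a ∈ Set.Icc (t i) (t (i+1)) → b ∈ Set.Icc (t i) (t (i+1)) →
            a ≤ b → g a ≠ g b → s ∈ D := by
          intro a b ha hb hab hgab
          have ha0 : 0 ≤ a := ((hpieces i hi) ha).1
          have hb1 : b ≤ 1 := ((hpieces i hi) hb).2
          have hlen : t (i+1) - t i < δ := hmesh i hi
          by_cases hblt : b < 1
          · have halt : a < 1 := lt_of_le_of_lt hab hblt
            have hidxne : stepIdx a ≠ stepIdx b := by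
              intro h
              apply hgab
              rw [step_g_eq hstep ha0 halt, step_g_eq hstep (le_trans ha0 hab) hblt, h]
            have hidxlt : stepIdx a < stepIdx b :=
              lt_of_le_of_ne (stepIdx_mono hab hblt) hidxne
            set k : ℕ := stepIdx a + 1 with hkdef
            set p : ℝ := 1 - (1/2:ℝ)^k with hpdef
            have hap : a < p := stepIdx_spec halt
            have hpb : p ≤ b := by
              have h5 : 1 - (1/2:ℝ)^(stepIdx b) ≤ b := stepIdx_lb (le_trans ha0 hab)
              have h6 : ((1:ℝ)/2)^(stepIdx b) ≤ (1/2)^k :=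
                pow_le_pow_of_le_one (by norm_num) (by norm_num) (by omega)
              rw [hpdef]; linarith
            -- p and s both in [t i, t (i+1)], so |s - p| < δ
            have hpI : p ∈ Set.Icc (t i) (t (i+1)) := ⟨le_trans ha.1 (le_of_lt hap), le_trans hpb hb.2⟩
            have hsp1 : s - p < δ := by
              have := hs.2; have := hpI.1; linarith
            have hsp2 : p - s < δ := by
              have := hs.1; have := hpI.2; linarith
            by_cases hk : k ≤ N
            · rw [hDdef]
              apply Set.mem_union_left
              apply Set.mem_biUnion (Finset.mem_Icc.mpr ⟨by omega, hk⟩)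
              constructor
              · rw [hpdef] at hsp2; linarith
              · rw [hpdef] at hsp1; linarith
            · rw [hDdef]
              apply Set.mem_union_right
              have h7 : ((1:ℝ)/2)^k ≤ (1/2)^N :=
                pow_le_pow_of_le_one (by norm_num) (by norm_num) (by omega)
              constructor
              · rw [hpdef] at hsp2; linarith
              · exact ((hpieces i hi) hs).2
          · have hb1' : b = 1 := le_antisymm hb1 (not_lt.mp hblt)
            rw [hDdef]
            apply Set.mem_union_right
            have h8 : 1 - s < δ := by
              have h9 : (1:ℝ) ∈ Set.Icc (t i) (t (i+1)) := hb1' ▸ hb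
              have := hs.1; have := h9.2; linarith
            have h10 : (0:ℝ) ≤ (1/2:ℝ)^N := by positivity
            constructor
            · linarith
            · exact ((hpieces i hi) hs).2
        rcases le_total (ξ i) s with hc | hc
        · exact key (ξ i) s (hmem i hi) hs hc hgs
        · exact key s (ξ i) hs (hmem i hi) hc (fun h => hgs h.symm)
      rw [hinddef, Set.indicator_of_mem hsD]
      calc ‖g (ξ i) - g s‖ ≤ ‖g (ξ i)‖ + ‖g s‖ := norm_sub_le _ _
        _ ≤ M' + M' := add_le_add (hgbound _ ((hpieces i hi) (hmem i hi)))
            (hgbound _ ((hpieces i hi) hs))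
        _ = C := by rw [hCdef]; ring
  -- the main chain
  have hsplit : (∑ i ∈ Finset.range m, ∫ x in t i..t (i+1), g x) = ∫ x in (0:ℝ)..1, g x := by
    rw [intervalIntegral.sum_integral_adjacent_intervals hpint, ht0, htm]
  have hsplitind : (∑ i ∈ Finset.range m, ∫ x in t i..t (i+1), ind x) = ∫ x in (0:ℝ)..1, ind x := by
    rw [intervalIntegral.sum_integral_adjacent_intervals hindint, ht0, htm]
  have hindeval : (∫ x in (0:ℝ)..1, ind x) = (volume (D ∩ Set.Ioc (0:ℝ) 1)).toReal * C := by
    rw [intervalIntegral.integral_of_le (by norm_num : (0:ℝ) ≤ 1), hinddef,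
      MeasureTheory.integral_indicator_const _ hDmeas, measureReal_def, Measure.restrict_apply hDmeas]
    simp [smul_eq_mul]
  have hvol : (volume (D ∩ Set.Ioc (0:ℝ) 1)).toReal ≤ 2*(N:ℝ)*δ + ((1/2:ℝ)^N + δ) := by
    apply ENNReal.toReal_le_of_le_ofReal (by positivity)
    refine le_trans (measure_mono Set.inter_subset_left) ?_
    rw [hDdef]
    refine le_trans (measure_union_le _ _) ?_
    have hA : volume (⋃ k ∈ Finset.Icc 1 N,
        Set.Ioo (1-(1/2:ℝ)^k - δ) (1-(1/2:ℝ)^k + δ)) ≤ ENNReal.ofReal (2*(N:ℝ)*δ) := by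
      refine le_trans (measure_biUnion_finset_le _ _) ?_
      have : ∀ k ∈ Finset.Icc 1 N, volume (Set.Ioo (1-(1/2:ℝ)^k - δ) (1-(1/2:ℝ)^k + δ))
          = ENNReal.ofReal (2*δ) := by
        intro k _
        rw [Real.volume_Ioo]
        congr 1; ring
      rw [Finset.sum_congr rfl this, Finset.sum_const, Nat.card_Icc]
      simp only [Nat.add_sub_cancel, nsmul_eq_mul]
      rw [← ENNReal.ofReal_natCast N, ← ENNReal.ofReal_mul (by positivity)]
      apply ENNReal.ofReal_le_ofReal
      nlinarith [hδpos, Nat.cast_nonneg (α := ℝ) N]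
    have hB : volume (Set.Ioc (1-(1/2:ℝ)^N - δ) 1) = ENNReal.ofReal ((1/2:ℝ)^N + δ) := by
      rw [Real.volume_Ioc]
      congr 1; ring
    rw [hB]
    refine le_trans (add_le_add hA (le_refl _)) ?_
    rw [← ENNReal.ofReal_add (by positivity) (by positivity)]
  have hfinal : (volume (D ∩ Set.Ioc (0:ℝ) 1)).toReal * C < ε := by
    have h11 : 2*M'*(2*(N:ℝ)+1)*δ = ε/4 := by
      rw [hδdef]; field_simp; ring
    have h12 : 2*M'*(ε/(8*M')) = ε/4 := by field_simp; ring
    have h13 : 2*M'*(1/2:ℝ)^N < ε/4 := by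
      calc 2*M'*(1/2:ℝ)^N < 2*M'*(ε/(8*M')) := by
            apply mul_lt_mul_of_pos_left hN (by positivity)
        _ = ε/4 := h12
    have h14 : (volume (D ∩ Set.Ioc (0:ℝ) 1)).toReal * C ≤ (2*(N:ℝ)*δ + ((1/2:ℝ)^N + δ)) * C := by
      apply mul_le_mul_of_nonneg_right hvol (by positivity)
    calc (volume (D ∩ Set.Ioc (0:ℝ) 1)).toReal * C ≤ (2*(N:ℝ)*δ + ((1/2:ℝ)^N + δ)) * C := h14
      _ = 2*M'*(2*(N:ℝ)+1)*δ + 2*M'*(1/2:ℝ)^N := by rw [hCdef]; ring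
      _ < ε/4 + ε/4 := by
          apply add_lt_add_of_le_of_lt (le_of_eq h11) h13
      _ < ε := by linarith
  calc ‖(∑ i ∈ Finset.range m, (t (i + 1) - t i) • g (ξ i)) - ∫ x in (0:ℝ)..1, g x‖
      = ‖∑ i ∈ Finset.range m, ((t (i + 1) - t i) • g (ξ i) - ∫ x in t i..t (i+1), g x)‖ := by
        rw [← hsplit, Finset.sum_sub_distrib]
    _ ≤ ∑ i ∈ Finset.range m, ‖(t (i + 1) - t i) • g (ξ i) - ∫ x in t i..t (i+1), g x‖ :=
        norm_sum_le _ _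
    _ ≤ ∑ i ∈ Finset.range m, ∫ x in t i..t (i+1), ind x := by
        apply Finset.sum_le_sum
        intro i hi'
        have hi : i < m := Finset.mem_range.mp hi'
        have hab : t i ≤ t (i+1) := le_of_lt (hinc i hi)
        have heq : (t (i + 1) - t i) • g (ξ i) - (∫ x in t i..t (i+1), g x)
            = ∫ x in t i..t (i+1), (g (ξ i) - g x) := by
          rw [intervalIntegral.integral_sub (intervalIntegrable_const) (hpint i hi),
            intervalIntegral.integral_const]
        rw [heq]
        refine le_trans (intervalIntegral.norm_integral_le_integral_norm hab) ?_
        apply intervalIntegral.integral_mono_on hab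
          ((intervalIntegrable_const.sub (hpint i hi)).norm) (hindint i hi)
        intro s hs
        exact hpt i hi s hs
    _ = ∫ x in (0:ℝ)..1, ind x := hsplitind
    _ = (volume (D ∩ Set.Ioc (0:ℝ) 1)).toReal * C := hindeval
    _ < ε := hfinal

/-- The step mapping `g(t) = y n` on `[1 − 2⁻ⁿ, 1 − 2⁻ⁿ⁻¹)`, `g 1 = 0`, is
Riemann integrable on `[0,1]` iff the sequence `(y n)` is bounded. -/
theorem step_riemannIntegrable_iff_bounded {E : Type*}
    [NormedAddCommGroup E] [NormedSpace ℝ E] [CompleteSpace E]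
    (y : ℕ → E) (g : ℝ → E)
    (hstep : ∀ n : ℕ, ∀ t ∈ Set.Ico (1 - (1 / 2 : ℝ) ^ n)
      (1 - (1 / 2 : ℝ) ^ (n + 1)), g t = y n)
    (h1 : g 1 = 0) :
    RiemannIntegrableOn g 0 1 ↔ ∃ M : ℝ, ∀ n, ‖y n‖ ≤ M :=
  ⟨step_forward y g hstep h1, step_backward y g hstep h1⟩
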